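/- Let n ≥ 2 and let λ_1 ≤ … ≤ λ_n be real numbers, and suppose λ_i < λ_{i+1} for some i ∈ {1,…,n−1}. Then for every τ ∈ ℝ, the set V_τ = { ξ ∈ ℝ^n \ {0} : t_i(ξ) = τ } has n-dimensional Lebesgue measure zero, where t_i(ξ) denotes the i-th smallest root (with multiplicity) of the polynomial I_ξ(t). -/

import Mathlib

open Polynomial MeasureTheory Finset

noncomputable def PiPoly (n : ℕ) (lam : Fin n → ℝ) (i : Fin n) : Polynomial ℝ :=
  ∏ j ∈ Finset.univ.erase i, (C (lam j) - X)

noncomputable def IPoly (n : ℕ) (lam : Fin n → ℝ) (ξ : Fin n → ℝ) : Polynomial ℝ :=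
  ∑ i, C ((ξ i) ^ 2) * PiPoly n lam i

section aux
variable {n : ℕ}

/-- distinct values -/
noncomputable def Sv (lam : Fin n → ℝ) : Finset ℝ := Finset.image lam Finset.univ

/-- multiplicity of a value -/
noncomputable def mv (lam : Fin n → ℝ) (ν : ℝ) : ℕ :=
  (Finset.univ.filter (fun j => lam j = ν)).card

noncomputable def Fp (lam : Fin n → ℝ) : Polynomial ℝ :=
  ∏ ν ∈ Sv lam, (C ν - X) ^ (mv lam ν - 1)

noncomputable def gp (lam ξ : Fin n → ℝ) : Polynomial ℝ :=
  ∑ ν ∈ Sv lam, C (∑ j ∈ Finset.univ.filter (fun j => lam j = ν), ξ j ^ 2) *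
    ∏ ν' ∈ (Sv lam).erase ν, (C ν' - X)

lemma mv_pos {lam : Fin n → ℝ} {ν : ℝ} (h : ν ∈ Sv lam) : 0 < mv lam ν := by
  obtain ⟨j, -, rfl⟩ := Finset.mem_image.mp h
  exact Finset.card_pos.mpr ⟨j, by simp [mv]⟩

lemma roots_CsubX (ν : ℝ) : (C ν - X : Polynomial ℝ).roots = {ν} := by
  have h : (C ν - X : Polynomial ℝ) = C (-1) * (X - C ν) := by
    rw [map_neg, map_one, neg_one_mul, neg_sub]
  rw [h, roots_C_mul _ (by norm_num), roots_X_sub_C]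

lemma CsubX_ne_zero (ν : ℝ) : (C ν - X : Polynomial ℝ) ≠ 0 := by
  intro h
  have := congrArg (fun p => Polynomial.coeff p 1) h
  simp at this

lemma Fp_ne_zero (lam : Fin n → ℝ) : Fp lam ≠ 0 :=
  Finset.prod_ne_zero_iff.mpr fun ν _ => pow_ne_zero _ (CsubX_ne_zero ν)

lemma PiPoly_eq (lam : Fin n → ℝ) (j : Fin n) :
    PiPoly n lam j = Fp lam * ∏ ν' ∈ (Sv lam).erase (lam j), (C ν' - X) := by
  classical
  have hmem : lam j ∈ Sv lam := Finset.mem_image_of_mem lam (Finset.mem_univ j)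
  have h1 : PiPoly n lam j
      = ∏ ν ∈ Sv lam, ∏ l ∈ (Finset.univ.erase j).filter (fun l => lam l = ν), (C (lam l) - X) := by
    rw [PiPoly]
    exact (Finset.prod_fiberwise_of_maps_to (t := Sv lam)
      (fun l _ => Finset.mem_image_of_mem lam (Finset.mem_univ l)) _).symm
  have h2 : ∀ ν ∈ Sv lam, (∏ l ∈ (Finset.univ.erase j).filter (fun l => lam l = ν), (C (lam l) - X))
      = (C ν - X) ^ (mv lam ν - (if ν = lam j then 1 else 0)) := by
    intro ν _
    have hset : (Finset.univ.erase j).filter (fun l => lam l = ν)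
        = (Finset.univ.filter (fun l => lam l = ν)).erase j := by
      ext l; simp [Finset.mem_erase, Finset.mem_filter, and_comm, and_left_comm]
    have hcongr : (∏ l ∈ (Finset.univ.erase j).filter (fun l => lam l = ν), (C (lam l) - X))
        = ∏ _l ∈ (Finset.univ.erase j).filter (fun l => lam l = ν), (C ν - X : Polynomial ℝ) := by
      apply Finset.prod_congr rfl
      intro l hl
      simp only [Finset.mem_filter] at hl
      rw [hl.2]
    rw [hcongr, Finset.prod_const, hset]
    congr 1
    by_cases hj : ν = lam j
    · subst hj
      rw [Finset.card_erase_of_mem (by simp), if_pos rfl]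
      rfl
    · rw [Finset.erase_eq_of_notMem (by simp; exact fun h => hj h.symm), if_neg hj]
      simp [mv]
  calc PiPoly n lam j
      = ∏ ν ∈ Sv lam, (C ν - X) ^ (mv lam ν - (if ν = lam j then 1 else 0)) := by
        rw [h1]; exact Finset.prod_congr rfl h2
    _ = ∏ ν ∈ Sv lam, ((C ν - X) ^ (mv lam ν - 1) * (C ν - X) ^ (if ν = lam j then 0 else 1)) := by
        apply Finset.prod_congr rfl
        intro ν hν
        rw [← pow_add]
        congr 1
        have := mv_pos hν
        split <;> omega
    _ = Fp lam * ∏ ν ∈ Sv lam, (C ν - X) ^ (if ν = lam j then 0 else 1) := by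
        rw [Finset.prod_mul_distrib]; rfl
    _ = Fp lam * ∏ ν' ∈ (Sv lam).erase (lam j), (C ν' - X) := by
        congr 1
        rw [← Finset.mul_prod_erase _ _ hmem, if_pos rfl, pow_zero, one_mul]
        apply Finset.prod_congr rfl
        intro ν hν
        rw [if_neg (Finset.ne_of_mem_erase hν), pow_one]

lemma IPoly_factor (lam ξ : Fin n → ℝ) : IPoly n lam ξ = Fp lam * gp lam ξ := by
  classical
  rw [IPoly, gp, Finset.mul_sum]
  rw [← Finset.sum_fiberwise_of_maps_to (g := lam) (t := Sv lam)
    (fun l _ => Finset.mem_image_of_mem lam (Finset.mem_univ l))]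
  apply Finset.sum_congr rfl
  intro ν hν
  have : ∀ j ∈ Finset.univ.filter (fun j => lam j = ν),
      C (ξ j ^ 2) * PiPoly n lam j
        = C (ξ j ^ 2) * (Fp lam * ∏ ν' ∈ (Sv lam).erase ν, (C ν' - X)) := by
    intro j hj
    simp only [Finset.mem_filter] at hj
    rw [PiPoly_eq, hj.2]
  rw [Finset.sum_congr rfl this, ← Finset.sum_mul, ← map_sum]
  ring

lemma gp_eval (lam ξ : Fin n → ℝ) {ν : ℝ} (hν : ν ∈ Sv lam) :
    (gp lam ξ).eval ν = (∑ j ∈ Finset.univ.filter (fun j => lam j = ν), ξ j ^ 2) *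
      ∏ ν' ∈ (Sv lam).erase ν, (ν' - ν) := by
  classical
  rw [gp, eval_finset_sum]
  rw [Finset.sum_eq_single ν]
  · rw [eval_mul, eval_C, eval_prod]; simp
  · intro μ hμ hne
    have : ν ∈ (Sv lam).erase μ := Finset.mem_erase.mpr ⟨Ne.symm hne, hν⟩
    rw [eval_mul, eval_prod]
    rw [Finset.prod_eq_zero this (by simp)]
    ring
  · intro h; exact absurd hν h

lemma neg_prod_pos {t : Finset ℝ} {f : ℝ → ℝ} (hf : ∀ x ∈ t, f x < 0) :
    0 < (-1) ^ t.card * ∏ x ∈ t, f x := by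
  classical
  induction t using Finset.induction_on with
  | empty => simp
  | @insert a s ha ih =>
    rw [Finset.prod_insert ha, Finset.card_insert_of_notMem ha, pow_succ]
    have h1 : 0 < (-1) ^ s.card * ∏ x ∈ s, f x := ih (fun x hx => hf x (Finset.mem_insert_of_mem hx))
    have h2 : f a < 0 := hf a (Finset.mem_insert_self a s)
    nlinarith

lemma sign_gp (lam ξ : Fin n → ℝ) (hξ : ∀ j, ξ j ≠ 0) {ν : ℝ} (hν : ν ∈ Sv lam) :
    0 < (-1) ^ ((Sv lam).filter (fun x => x < ν)).card * (gp lam ξ).eval ν := by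
  classical
  rw [gp_eval lam ξ hν]
  obtain ⟨j0, -, hj0⟩ := Finset.mem_image.mp hν
  have hc : 0 < ∑ j ∈ Finset.univ.filter (fun j => lam j = ν), ξ j ^ 2 := by
    apply Finset.sum_pos
    · intro j _
      exact pow_two_pos_of_ne_zero (hξ j)
    · exact ⟨j0, by simp [hj0]⟩
  have hsplit : (Sv lam).erase ν
      = ((Sv lam).filter (fun x => x < ν)) ∪ ((Sv lam).filter (fun x => ν < x)) := by
    ext x
    simp only [Finset.mem_erase, Finset.mem_union, Finset.mem_filter]
    constructor
    · rintro ⟨hne, hx⟩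
      rcases lt_or_gt_of_ne hne with h | h
      · exact Or.inl ⟨hx, h⟩
      · exact Or.inr ⟨hx, h⟩
    · rintro (⟨hx, h⟩ | ⟨hx, h⟩)
      · exact ⟨h.ne, hx⟩
      · exact ⟨h.ne', hx⟩
  have hdisj : Disjoint ((Sv lam).filter (fun x => x < ν)) ((Sv lam).filter (fun x => ν < x)) := by
    rw [Finset.disjoint_left]
    intro x hx1 hx2
    simp only [Finset.mem_filter] at hx1 hx2
    linarith [hx1.2, hx2.2]
  rw [hsplit, Finset.prod_union hdisj]
  have hpos2 : 0 < ∏ x ∈ (Sv lam).filter (fun x => ν < x), (x - ν) :=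
    Finset.prod_pos (fun x hx => by simp only [Finset.mem_filter] at hx; linarith [hx.2])
  have hneg : 0 < (-1) ^ ((Sv lam).filter (fun x => x < ν)).card *
      ∏ x ∈ (Sv lam).filter (fun x => x < ν), (x - ν) :=
    neg_prod_pos (fun x hx => by simp only [Finset.mem_filter] at hx; linarith [hx.2])
  nlinarith [mul_pos hc (mul_pos hneg hpos2)]

lemma gp_ne_zero (lam ξ : Fin n → ℝ) (hξ : ∀ j, ξ j ≠ 0) {ν : ℝ} (hν : ν ∈ Sv lam) :
    gp lam ξ ≠ 0 := by
  intro h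
  have := sign_gp lam ξ hξ hν
  rw [h] at this
  simp at this

lemma root_between (lam ξ : Fin n → ℝ) (hξ : ∀ j, ξ j ≠ 0) {μ c : ℝ}
    (hμ : μ ∈ Sv lam) (hc : c ∈ Sv lam) (hlt : μ < c)
    (hcard : ((Sv lam).filter (fun x => x < c)).card
      = ((Sv lam).filter (fun x => x < μ)).card + 1) :
    ∃ x, μ < x ∧ x < c ∧ (gp lam ξ).eval x = 0 := by
  classical
  have h1 := sign_gp lam ξ hξ hμ
  have h2 := sign_gp lam ξ hξ hc
  have hprod : (gp lam ξ).eval μ * (gp lam ξ).eval c < 0 := by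
    rw [hcard] at h2
    rw [pow_succ] at h2
    rcases Nat.even_or_odd ((Sv lam).filter (fun x => x < μ)).card with he | ho
    · rw [he.neg_one_pow] at h1 h2
      nlinarith
    · rw [ho.neg_one_pow] at h1 h2
      nlinarith
  have hcont : ContinuousOn (fun x => (gp lam ξ).eval x) (Set.Icc μ c) :=
    ((gp lam ξ).continuous_aeval).continuousOn
  rcases lt_or_ge ((gp lam ξ).eval μ) 0 with hneg | hpos
  · have hpos2 : 0 < (gp lam ξ).eval c := by nlinarith
    have : (0:ℝ) ∈ Set.Ioo ((gp lam ξ).eval μ) ((gp lam ξ).eval c) := ⟨hneg, hpos2⟩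
    obtain ⟨x, hx, hx0⟩ := intermediate_value_Ioo hlt.le hcont this
    exact ⟨x, hx.1, hx.2, hx0⟩
  · have hpos1 : 0 < (gp lam ξ).eval μ := by
      rcases lt_or_eq_of_le hpos with h | h
      · exact h
      · exfalso; rw [← h, zero_mul] at hprod; exact absurd hprod (lt_irrefl 0)
    have hneg2 : (gp lam ξ).eval c < 0 := by nlinarith
    have : (0:ℝ) ∈ Set.Ioo ((gp lam ξ).eval c) ((gp lam ξ).eval μ) := ⟨hneg2, hpos1⟩
    obtain ⟨x, hx, hx0⟩ := intermediate_value_Ioo' hlt.le hcont this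
    exact ⟨x, hx.1, hx.2, hx0⟩

lemma countP_lt_roots_gp (lam ξ : Fin n → ℝ) (hξ : ∀ j, ξ j ≠ 0) :
    ∀ (K : ℕ), ∀ c ∈ Sv lam, ((Sv lam).filter (fun x => x < c)).card = K →
      K ≤ Multiset.countP (fun y => y < c) (gp lam ξ).roots := by
  classical
  intro K
  induction K with
  | zero => intro c _ _; exact Nat.zero_le _
  | succ K ih =>
    intro c hc hK
    have hne : ((Sv lam).filter (fun x => x < c)).Nonempty :=
      Finset.card_pos.mp (by omega)
    set T := (Sv lam).filter (fun x => x < c) with hT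
    set μ := T.max' hne with hμdef
    have hμT : μ ∈ T := T.max'_mem hne
    have hμS : μ ∈ Sv lam := (Finset.mem_filter.mp hμT).1
    have hμc : μ < c := (Finset.mem_filter.mp hμT).2
    have hTerase : (Sv lam).filter (fun x => x < μ) = T.erase μ := by
      ext x
      simp only [Finset.mem_erase, hT, Finset.mem_filter]
      constructor
      · rintro ⟨hx, hlt⟩
        exact ⟨hlt.ne, hx, hlt.trans hμc⟩
      · rintro ⟨hne', hx, hlt⟩
        exact ⟨hx, lt_of_le_of_ne (T.le_max' x (Finset.mem_filter.mpr ⟨hx, hlt⟩)) hne'⟩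
    have hcard2 : ((Sv lam).filter (fun x => x < μ)).card = K := by
      rw [hTerase, Finset.card_erase_of_mem hμT]; omega
    have hIH := ih μ hμS hcard2
    obtain ⟨x, hx1, hx2, hx0⟩ := root_between lam ξ hξ hμS hc hμc (by rw [hcard2, ← hK, hT])
    have hxroot : x ∈ (gp lam ξ).roots :=
      (Polynomial.mem_roots (gp_ne_zero lam ξ hξ hc)).mpr hx0
    have hsplit : Multiset.countP (fun y => y < c) (gp lam ξ).roots
        = Multiset.countP (fun y => y < μ) (gp lam ξ).roots
          + Multiset.countP (fun y => μ ≤ y ∧ y < c) (gp lam ξ).roots := by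
      simp only [Multiset.countP_eq_card_filter]
      rw [← Multiset.card_add, Multiset.filter_add_filter]
      have h1 : Multiset.filter (fun y => y < μ ∨ (μ ≤ y ∧ y < c)) (gp lam ξ).roots
          = Multiset.filter (fun y => y < c) (gp lam ξ).roots := by
        apply Multiset.filter_congr
        intro y _
        constructor
        · rintro (h | ⟨-, h⟩)
          · exact h.trans hμc
          · exact h
        · intro h
          rcases lt_or_ge y μ with h' | h'
          · exact Or.inl h'
          · exact Or.inr ⟨h', h⟩
      have h2 : Multiset.filter (fun y => y < μ ∧ (μ ≤ y ∧ y < c)) (gp lam ξ).roots = 0 := by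
        rw [Multiset.filter_eq_nil.mpr]
        intro y _ hy
        exact absurd (hy.1.trans_le hy.2.1) (lt_irrefl _)
      rw [h1, h2]
      simp
    have hone : 1 ≤ Multiset.countP (fun y => μ ≤ y ∧ y < c) (gp lam ξ).roots :=
      Multiset.countP_pos.mpr ⟨x, hxroot, hx1.le, hx2⟩
    omega

lemma countP_gt_roots_gp (lam ξ : Fin n → ℝ) (hξ : ∀ j, ξ j ≠ 0) :
    ∀ (K : ℕ), ∀ c ∈ Sv lam, ((Sv lam).filter (fun x => c < x)).card = K →
      K ≤ Multiset.countP (fun y => c < y) (gp lam ξ).roots := by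
  classical
  intro K
  induction K with
  | zero => intro c _ _; exact Nat.zero_le _
  | succ K ih =>
    intro c hc hK
    have hne : ((Sv lam).filter (fun x => c < x)).Nonempty :=
      Finset.card_pos.mp (by omega)
    set T := (Sv lam).filter (fun x => c < x) with hT
    set μ := T.min' hne with hμdef
    have hμT : μ ∈ T := T.min'_mem hne
    have hμS : μ ∈ Sv lam := (Finset.mem_filter.mp hμT).1
    have hμc : c < μ := (Finset.mem_filter.mp hμT).2
    have hTerase : (Sv lam).filter (fun x => μ < x) = T.erase μ := by
      ext x
      simp only [Finset.mem_erase, hT, Finset.mem_filter]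
      constructor
      · rintro ⟨hx, hlt⟩
        exact ⟨hlt.ne', hx, hμc.trans hlt⟩
      · rintro ⟨hne', hx, hlt⟩
        exact ⟨hx, lt_of_le_of_ne (T.min'_le x (Finset.mem_filter.mpr ⟨hx, hlt⟩)) (Ne.symm hne')⟩
    have hcard2 : ((Sv lam).filter (fun x => μ < x)).card = K := by
      rw [hTerase, Finset.card_erase_of_mem hμT]; omega
    have hIH := ih μ hμS hcard2
    have hcc : ((Sv lam).filter (fun x => x < μ)).card
        = ((Sv lam).filter (fun x => x < c)).card + 1 := by
      have hsplit' : (Sv lam).filter (fun x => x < μ)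
          = insert c ((Sv lam).filter (fun x => x < c)) := by
        ext x
        simp only [Finset.mem_insert, Finset.mem_filter]
        constructor
        · rintro ⟨hx, hlt⟩
          rcases lt_or_ge x c with h | h
          · exact Or.inr ⟨hx, h⟩
          · left
            rcases lt_or_ge c x with h' | h'
            · exfalso
              have : x ∈ T := Finset.mem_filter.mpr ⟨hx, h'⟩
              exact absurd (T.min'_le x this) (not_le.mpr hlt)
            · exact le_antisymm h' h
        · rintro (rfl | ⟨hx, hlt⟩)
          · exact ⟨hc, hμc⟩
          · exact ⟨hx, hlt.trans hμc⟩
      rw [hsplit', Finset.card_insert_of_notMem (by simp)]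
    obtain ⟨x, hx1, hx2, hx0⟩ := root_between lam ξ hξ hc hμS hμc hcc
    have hxroot : x ∈ (gp lam ξ).roots :=
      (Polynomial.mem_roots (gp_ne_zero lam ξ hξ hc)).mpr hx0
    have hsplit : Multiset.countP (fun y => c < y) (gp lam ξ).roots
        = Multiset.countP (fun y => μ < y) (gp lam ξ).roots
          + Multiset.countP (fun y => c < y ∧ y ≤ μ) (gp lam ξ).roots := by
      simp only [Multiset.countP_eq_card_filter]
      rw [← Multiset.card_add, Multiset.filter_add_filter]
      have h1 : Multiset.filter (fun y => μ < y ∨ (c < y ∧ y ≤ μ)) (gp lam ξ).roots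
          = Multiset.filter (fun y => c < y) (gp lam ξ).roots := by
        apply Multiset.filter_congr
        intro y _
        constructor
        · rintro (h | ⟨h, -⟩)
          · exact hμc.trans h
          · exact h
        · intro h
          rcases lt_or_ge μ y with h' | h'
          · exact Or.inl h'
          · exact Or.inr ⟨h, h'⟩
      have h2 : Multiset.filter (fun y => μ < y ∧ (c < y ∧ y ≤ μ)) (gp lam ξ).roots = 0 := by
        rw [Multiset.filter_eq_nil.mpr]
        intro y _ hy
        exact absurd (hy.1.trans_le hy.2.2) (lt_irrefl _)
      rw [h1, h2]
      simp
    have hone : 1 ≤ Multiset.countP (fun y => c < y ∧ y ≤ μ) (gp lam ξ).roots :=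
      Multiset.countP_pos.mpr ⟨x, hxroot, hx1, hx2.le⟩
    omega

lemma roots_prod_pow (s : Finset ℝ) (e : ℝ → ℕ) :
    (∏ ν ∈ s, (C ν - X) ^ (e ν)).roots = ∑ ν ∈ s, (e ν) • ({ν} : Multiset ℝ) := by
  classical
  induction s using Finset.induction_on with
  | empty => simp
  | @insert a s ha ih =>
    rw [Finset.prod_insert ha, Finset.sum_insert ha, Polynomial.roots_mul, Polynomial.roots_pow,
      roots_CsubX, ih]
    exact mul_ne_zero (pow_ne_zero _ (CsubX_ne_zero a))
      (Finset.prod_ne_zero_iff.mpr fun ν _ => pow_ne_zero _ (CsubX_ne_zero ν))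

lemma roots_Fp (lam : Fin n → ℝ) :
    (Fp lam).roots = ∑ ν ∈ Sv lam, (mv lam ν - 1) • ({ν} : Multiset ℝ) :=
  roots_prod_pow _ _

lemma countP_finsum {α β : Type*} (p : α → Prop) [DecidablePred p] (s : Finset β)
    (f : β → Multiset α) :
    Multiset.countP p (∑ b ∈ s, f b) = ∑ b ∈ s, Multiset.countP p (f b) := by
  classical
  induction s using Finset.induction_on with
  | empty => simp
  | @insert a s ha ih => rw [Finset.sum_insert ha, Finset.sum_insert ha, Multiset.countP_add, ih]

lemma countP_roots_Fp (lam : Fin n → ℝ) (p : ℝ → Prop) [DecidablePred p] :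
    Multiset.countP p (Fp lam).roots
      = ∑ ν ∈ (Sv lam).filter p, (mv lam ν - 1) := by
  classical
  rw [roots_Fp, countP_finsum, Finset.sum_filter]
  apply Finset.sum_congr rfl
  intro ν _
  rw [Multiset.countP_nsmul]
  have hs : Multiset.countP p ({ν} : Multiset ℝ) = if p ν then 1 else 0 := by
    rw [Multiset.countP_eq_card_filter, Multiset.filter_singleton]
    split <;> simp
  rw [hs]
  split <;> simp

lemma natDegree_IPoly_le (lam ξ : Fin n → ℝ) : (IPoly n lam ξ).natDegree ≤ n - 1 := by
  rw [IPoly]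
  apply Polynomial.natDegree_sum_le_of_forall_le
  intro j _
  refine (Polynomial.natDegree_C_mul_le _ _).trans ?_
  refine (Polynomial.natDegree_prod_le _ _).trans ?_
  have h1 : ∀ l ∈ Finset.univ.erase j, (C (lam l) - X : Polynomial ℝ).natDegree = 1 := by
    intro l _
    have : (C (lam l) - X : Polynomial ℝ) = -(X - C (lam l)) := by ring
    rw [this, Polynomial.natDegree_neg, Polynomial.natDegree_X_sub_C]
  rw [Finset.sum_congr rfl h1, Finset.sum_const, smul_eq_mul, mul_one,
    Finset.card_erase_of_mem (Finset.mem_univ j), Finset.card_univ, Fintype.card_fin]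

/-- trichotomy counting for multisets of reals -/
lemma card_tri (R : Multiset ℝ) (c : ℝ) :
    Multiset.card R = Multiset.countP (fun y => y < c) R
      + Multiset.countP (fun y => y = c) R + Multiset.countP (fun y => c < y) R := by
  classical
  have h1 := Multiset.card_eq_countP_add_countP (fun y => y < c) R
  have h2 : Multiset.countP (fun y => ¬ y < c) R
      = Multiset.countP (fun y => y = c) R + Multiset.countP (fun y => c < y) R := by
    simp only [Multiset.countP_eq_card_filter]
    rw [← Multiset.card_add, Multiset.filter_add_filter]
    have e1 : Multiset.filter (fun y => y = c ∨ c < y) R = Multiset.filter (fun y => ¬ y < c) R := by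
      apply Multiset.filter_congr
      intro y _
      constructor
      · rintro (rfl | h)
        · exact lt_irrefl y
        · exact not_lt.mpr h.le
      · intro h
        rcases eq_or_lt_of_le (not_lt.mp h) with h' | h'
        · exact Or.inl h'.symm
        · exact Or.inr h'
    have e2 : Multiset.filter (fun y => y = c ∧ c < y) R = 0 := by
      rw [Multiset.filter_eq_nil.mpr]
      rintro y _ ⟨rfl, h2⟩
      exact absurd h2 (lt_irrefl y)
    rw [e1, e2]
    simp
  omega

lemma countP_le_split (R : Multiset ℝ) (c : ℝ) :
    Multiset.countP (fun y => y ≤ c) R = Multiset.countP (fun y => y < c) R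
      + Multiset.countP (fun y => y = c) R := by
  classical
  simp only [Multiset.countP_eq_card_filter]
  rw [← Multiset.card_add, Multiset.filter_add_filter]
  have e1 : Multiset.filter (fun y => y < c ∨ y = c) R = Multiset.filter (fun y => y ≤ c) R := by
    apply Multiset.filter_congr
    intro y _
    exact ⟨fun h => h.elim le_of_lt le_of_eq, fun h => lt_or_eq_of_le h⟩
  have e2 : Multiset.filter (fun y => y < c ∧ y = c) R = 0 := by
    rw [Multiset.filter_eq_nil.mpr]
    rintro y _ ⟨h1, rfl⟩
    exact absurd h1 (lt_irrefl y)
  rw [e1, e2]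
  simp

lemma master (lam ξ : Fin n → ℝ) (hξ : ∀ j, ξ j ≠ 0) {c : ℝ} (hc : c ∈ Sv lam) :
    Multiset.countP (fun y => y < c) (IPoly n lam ξ).roots
        = (Finset.univ.filter (fun j => lam j < c)).card
    ∧ Multiset.countP (fun y => y ≤ c) (IPoly n lam ξ).roots
        = (Finset.univ.filter (fun j => lam j < c)).card + (mv lam c - 1)
    ∧ Multiset.card (IPoly n lam ξ).roots = n - 1 := by
  classical
  have hIfac := IPoly_factor lam ξ
  have hIne : IPoly n lam ξ ≠ 0 := by
    rw [hIfac]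
    exact mul_ne_zero (Fp_ne_zero lam) (gp_ne_zero lam ξ hξ hc)
  have hroots : (IPoly n lam ξ).roots = (Fp lam).roots + (gp lam ξ).roots := by
    rw [hIfac, Polynomial.roots_mul (hIfac ▸ hIne)]
  have hcardle : Multiset.card (IPoly n lam ξ).roots ≤ n - 1 :=
    (Polynomial.card_roots' _).trans (natDegree_IPoly_le lam ξ)
  -- abbreviations
  set a := (Finset.univ.filter (fun j => lam j < c)).card with ha
  set p := (Finset.univ.filter (fun j => c < lam j)).card with hp
  set m := mv lam c with hm
  have hm1 : 1 ≤ m := mv_pos hc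
  -- partition of indices
  have hamp : a + m + p = n := by
    have h1 := Finset.card_filter_add_card_filter_not
      (s := (Finset.univ : Finset (Fin n))) (p := fun j => lam j < c)
    have h2 : Finset.univ.filter (fun j => ¬ lam j < c)
        = Finset.univ.filter (fun j => lam j = c) ∪ Finset.univ.filter (fun j => c < lam j) := by
      ext j
      simp only [Finset.mem_union, Finset.mem_filter, Finset.mem_univ, true_and, not_lt]
      constructor
      · intro h
        rcases eq_or_lt_of_le h with h' | h'
        · exact Or.inl h'.symm
        · exact Or.inr h'
      · rintro (rfl | h)
        · exact le_refl _
        · exact h.le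
    have h3 : Disjoint (Finset.univ.filter (fun j => lam j = c))
        (Finset.univ.filter (fun j => c < lam j)) := by
      rw [Finset.disjoint_left]
      intro j hj1 hj2
      simp only [Finset.mem_filter] at hj1 hj2
      rw [hj1.2] at hj2
      exact absurd hj2.2 (lt_irrefl c)
    rw [h2, Finset.card_union_of_disjoint h3] at h1
    simp only [Finset.card_univ, Fintype.card_fin] at h1
    rw [ha, hp, hm, mv]
    omega
  -- fiberwise sums
  have hfib_lt : a = ∑ ν ∈ (Sv lam).filter (fun x => x < c), mv lam ν := by
    rw [ha]
    rw [Finset.card_eq_sum_card_fiberwise (f := lam) (t := (Sv lam).filter (fun x => x < c))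
      (fun j hj => Finset.mem_filter.mpr
        ⟨Finset.mem_image_of_mem lam (Finset.mem_univ j), (Finset.mem_filter.mp hj).2⟩)]
    apply Finset.sum_congr rfl
    intro ν hν
    have hνlt : ν < c := (Finset.mem_filter.mp hν).2
    rw [mv]
    congr 1
    ext j
    simp only [Finset.mem_filter, Finset.mem_univ, true_and]
    exact ⟨fun h => h.2, fun h => ⟨h ▸ hνlt, h⟩⟩
  have hfib_gt : p = ∑ ν ∈ (Sv lam).filter (fun x => c < x), mv lam ν := by
    rw [hp]
    rw [Finset.card_eq_sum_card_fiberwise (f := lam) (t := (Sv lam).filter (fun x => c < x))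
      (fun j hj => Finset.mem_filter.mpr
        ⟨Finset.mem_image_of_mem lam (Finset.mem_univ j), (Finset.mem_filter.mp hj).2⟩)]
    apply Finset.sum_congr rfl
    intro ν hν
    have hνlt : c < ν := (Finset.mem_filter.mp hν).2
    rw [mv]
    congr 1
    ext j
    simp only [Finset.mem_filter, Finset.mem_univ, true_and]
    exact ⟨fun h => h.2, fun h => ⟨h ▸ hνlt, h⟩⟩
  -- F-part counts
  have hFlt : Multiset.countP (fun y => y < c) (Fp lam).roots
      = ∑ ν ∈ (Sv lam).filter (fun x => x < c), (mv lam ν - 1) := countP_roots_Fp lam _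
  have hFgt : Multiset.countP (fun y => c < y) (Fp lam).roots
      = ∑ ν ∈ (Sv lam).filter (fun x => c < x), (mv lam ν - 1) := countP_roots_Fp lam _
  have hFeq : Multiset.countP (fun y => y = c) (Fp lam).roots = m - 1 := by
    rw [countP_roots_Fp lam _]
    have : (Sv lam).filter (fun x => x = c) = {c} := by
      ext x
      simp only [Finset.mem_filter, Finset.mem_singleton]
      exact ⟨fun h => h.2, fun h => ⟨h ▸ hc, h⟩⟩
    rw [this, Finset.sum_singleton]
  -- g-part lower bounds
  have hKlt := countP_lt_roots_gp lam ξ hξ ((Sv lam).filter (fun x => x < c)).card c hc rfl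
  have hKgt := countP_gt_roots_gp lam ξ hξ ((Sv lam).filter (fun x => c < x)).card c hc rfl
  -- totals
  have hsum_lt : ∑ ν ∈ (Sv lam).filter (fun x => x < c), mv lam ν
      = (∑ ν ∈ (Sv lam).filter (fun x => x < c), (mv lam ν - 1))
        + ((Sv lam).filter (fun x => x < c)).card := by
    rw [Finset.card_eq_sum_ones, ← Finset.sum_add_distrib]
    apply Finset.sum_congr rfl
    intro ν hν
    have := mv_pos (Finset.mem_filter.mp hν).1
    omega
  have hsum_gt : ∑ ν ∈ (Sv lam).filter (fun x => c < x), mv lam ν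
      = (∑ ν ∈ (Sv lam).filter (fun x => c < x), (mv lam ν - 1))
        + ((Sv lam).filter (fun x => c < x)).card := by
    rw [Finset.card_eq_sum_ones, ← Finset.sum_add_distrib]
    apply Finset.sum_congr rfl
    intro ν hν
    have := mv_pos (Finset.mem_filter.mp hν).1
    omega
  have hAlow : a ≤ Multiset.countP (fun y => y < c) (IPoly n lam ξ).roots := by
    rw [hroots, Multiset.countP_add, hFlt]
    omega
  have hBlow : p ≤ Multiset.countP (fun y => c < y) (IPoly n lam ξ).roots := by
    rw [hroots, Multiset.countP_add, hFgt]
    omega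
  have hElow : m - 1 ≤ Multiset.countP (fun y => y = c) (IPoly n lam ξ).roots := by
    rw [hroots, Multiset.countP_add, hFeq]
    omega
  have htri := card_tri (IPoly n lam ξ).roots c
  have hsplit := countP_le_split (IPoly n lam ξ).roots c
  refine ⟨by omega, by omega, by omega⟩


lemma sorted_pos (R : Multiset ℝ) (i : ℕ) (hi : i < Multiset.card R) (v : ℝ)
    (hv : (R.sort (· ≤ ·)).getD i 0 = v) :
    Multiset.countP (fun y => y < v) R ≤ i ∧ i < Multiset.countP (fun y => y ≤ v) R := by
  set l := R.sort (· ≤ ·) with hldef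
  have hlen : i < l.length := by rw [hldef, Multiset.length_sort]; exact hi
  have hsorted : l.Pairwise (· ≤ ·) := Multiset.pairwise_sort _ _
  have hpw := List.pairwise_iff_getElem.mp hsorted
  have hvi : l[i] = v := by rw [← hv]; exact (List.getD_eq_getElem l 0 hlen).symm
  have hcount : ∀ (p : ℝ → Prop) (_ : DecidablePred p),
      Multiset.countP p R = l.countP (fun a => decide (p a)) := by
    intro p hp
    conv_lhs => rw [← Multiset.sort_eq R (· ≤ ·)]
    rw [← hldef, Multiset.coe_countP]
  constructor
  · simp only [hcount]
    have hsplit : l.countP (fun a => decide (a < v))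
        = (l.take i).countP (fun a => decide (a < v))
          + (l.drop i).countP (fun a => decide (a < v)) := by
      rw [← List.countP_append, List.take_append_drop]
    have h1 : (l.take i).countP (fun a => decide (a < v)) ≤ i :=
      (List.countP_le_length).trans (by rw [List.length_take]; omega)
    have h2 : (l.drop i).countP (fun a => decide (a < v)) = 0 := by
      apply List.countP_eq_zero.mpr
      intro x hx
      obtain ⟨k, hk, rfl⟩ := List.mem_iff_getElem.mp hx
      rw [List.getElem_drop]
      simp only [decide_eq_true_eq, not_lt]
      rw [← hvi]
      have hik : i + k < l.length := by rw [List.length_drop] at hk; omega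
      rcases Nat.eq_zero_or_pos k with rfl | hk0
      · exact le_of_eq (by simp)
      · exact hpw i (i + k) hlen hik (by omega)
    omega
  · simp only [hcount]
    have hsplit : l.countP (fun a => decide (a ≤ v))
        = (l.take (i+1)).countP (fun a => decide (a ≤ v))
          + (l.drop (i+1)).countP (fun a => decide (a ≤ v)) := by
      rw [← List.countP_append, List.take_append_drop]
    have h1 : (l.take (i+1)).countP (fun a => decide (a ≤ v)) = i + 1 := by
      rw [List.countP_eq_length.mpr, List.length_take]
      · omega
      · intro x hx
        obtain ⟨k, hk, rfl⟩ := List.mem_iff_getElem.mp hx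
        rw [List.getElem_take]
        simp only [decide_eq_true_eq]
        rw [← hvi]
        have hk' : k < i + 1 := by rw [List.length_take] at hk; omega
        rcases Nat.eq_or_lt_of_le (Nat.lt_succ_iff.mp hk') with h | h
        · exact le_of_eq (by congr 1)
        · exact hpw k i (by omega) hlen h
    omega


lemma mono_lt_seg {n : ℕ} (lam : Fin n → ℝ) (hlam : Monotone lam) (c : ℝ) (j : Fin n)
    (h : lam j < c) : (j : ℕ) < (Finset.univ.filter (fun k => lam k < c)).card := by
  have hsub : Finset.Iic j ⊆ Finset.univ.filter (fun k => lam k < c) := by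
    intro k hk
    simp only [Finset.mem_Iic] at hk
    exact Finset.mem_filter.mpr ⟨Finset.mem_univ k, lt_of_le_of_lt (hlam hk) h⟩
  have := Finset.card_le_card hsub
  rw [Fin.card_Iic] at this
  omega

lemma mono_le_seg {n : ℕ} (lam : Fin n → ℝ) (hlam : Monotone lam) (c : ℝ) (j : Fin n)
    (h : c < lam j) : (Finset.univ.filter (fun k => lam k ≤ c)).card ≤ (j : ℕ) := by
  have hsub : Finset.univ.filter (fun k => lam k ≤ c) ⊆ Finset.Iio j := by
    intro k hk
    simp only [Finset.mem_filter] at hk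
    simp only [Finset.mem_Iio]
    by_contra hle
    exact absurd (lt_of_lt_of_le h (hlam (not_lt.mp hle))) (not_lt.mpr hk.2)
  have := Finset.card_le_card hsub
  rwa [Fin.card_Iio] at this

lemma slice_null (A b : ℝ) (hA : A ≠ 0) : volume {x : ℝ | A * x ^ 2 + b = 0} = 0 := by
  refine measure_mono_null (fun x hx => ?_)
    (((Set.finite_singleton (-Real.sqrt (-b / A))).insert (Real.sqrt (-b / A))).measure_zero volume)
  · 
    simp only [Set.mem_setOf_eq] at hx
    have hx2 : x ^ 2 = -b / A := by field_simp; linarith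
    have : Real.sqrt (-b / A) = |x| := by rw [← hx2, Real.sqrt_sq_eq_abs]
    rcases abs_cases x with ⟨h1, -⟩ | ⟨h1, -⟩
    · left; rw [this, h1]
    · right; simp only [Set.mem_singleton_iff]; rw [this, h1, neg_neg]

lemma quadric_null {m : ℕ} (q : Fin (m + 1) → ℝ) (j0 : Fin (m + 1)) (hq : q j0 ≠ 0) :
    volume {ξ : Fin (m + 1) → ℝ | ∑ j, q j * ξ j ^ 2 = 0} = 0 := by
  classical
  set e := MeasurableEquiv.piFinSuccAbove (fun _ : Fin (m + 1) => ℝ) j0 with he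
  have hmp : MeasurePreserving e volume volume :=
    volume_preserving_piFinSuccAbove (fun _ : Fin (m + 1) => ℝ) j0
  set f : ℝ × (Fin m → ℝ) → ℝ :=
    fun p => q j0 * p.1 ^ 2 + ∑ j, q (j0.succAbove j) * (p.2 j) ^ 2 with hf
  have hfc : Continuous f := by fun_prop
  set B := f ⁻¹' {0} with hB
  have hBmeas : MeasurableSet B := hfc.measurable (measurableSet_singleton 0)
  have hset : {ξ : Fin (m + 1) → ℝ | ∑ j, q j * ξ j ^ 2 = 0} = e ⁻¹' B := by
    ext ξ
    simp only [Set.mem_setOf_eq, Set.mem_preimage, hB, hf, Set.mem_singleton_iff]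
    rw [Fin.sum_univ_succAbove (fun j => q j * ξ j ^ 2) j0]
    constructor
    · intro h
      convert h using 2 <;> rfl
    · intro h
      convert h using 2 <;> rfl
  rw [hset, hmp.measure_preimage hBmeas.nullMeasurableSet]
  rw [Measure.volume_eq_prod, ← Measure.prod_swap]
  rw [Measure.map_apply measurable_swap hBmeas]
  have hswap : Prod.swap ⁻¹' B
      = {p : (Fin m → ℝ) × ℝ | q j0 * p.2 ^ 2 + ∑ j, q (j0.succAbove j) * (p.1 j) ^ 2 = 0} := by
    ext p
    simp [hB, hf, Set.mem_preimage]
  rw [hswap]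
  have hmeas2 : MeasurableSet
      {p : (Fin m → ℝ) × ℝ | q j0 * p.2 ^ 2 + ∑ j, q (j0.succAbove j) * (p.1 j) ^ 2 = 0} := by
    have : Continuous fun p : (Fin m → ℝ) × ℝ =>
        q j0 * p.2 ^ 2 + ∑ j, q (j0.succAbove j) * (p.1 j) ^ 2 := by fun_prop
    exact this.measurable (measurableSet_singleton 0)
  rw [Measure.measure_prod_null hmeas2]
  apply Filter.Eventually.of_forall
  intro y
  have : (Prod.mk y ⁻¹' {p : (Fin m → ℝ) × ℝ |
      q j0 * p.2 ^ 2 + ∑ j, q (j0.succAbove j) * (p.1 j) ^ 2 = 0})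
      = {x : ℝ | q j0 * x ^ 2 + ∑ j, q (j0.succAbove j) * (y j) ^ 2 = 0} := by
    ext x; simp
  show volume _ = (0 : (Fin m → ℝ) → ENNReal) y
  rw [this]
  exact slice_null _ _ hq

lemma hyperplane_null {n : ℕ} (j : Fin n) : volume {ξ : Fin n → ℝ | ξ j = 0} = 0 := by
  rw [MeasureTheory.volume_pi]
  exact MeasureTheory.Measure.pi_hyperplane _ j 0


lemma main_ne {n : ℕ} (lam : Fin n → ℝ) (hlam : Monotone lam) (i : ℕ) (hi : i + 1 < n)
    (hlt : lam ⟨i, Nat.lt_of_succ_lt hi⟩ < lam ⟨i + 1, hi⟩) (τ : ℝ) (ξ : Fin n → ℝ)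
    (hξ : ∀ j, ξ j ≠ 0) (hcase : τ ∈ Sv lam ∨ (IPoly n lam ξ).eval τ ≠ 0) :
    ((IPoly n lam ξ).roots.sort (· ≤ ·)).getD i 0 ≠ τ := by
  classical
  intro hgetD
  have hc0 : lam ⟨i, Nat.lt_of_succ_lt hi⟩ ∈ Sv lam := Finset.mem_image_of_mem lam (Finset.mem_univ _)
  obtain ⟨-, -, hcard⟩ := master lam ξ hξ hc0
  have hin : i < Multiset.card (IPoly n lam ξ).roots := by omega
  have hpos := sorted_pos _ i hin τ hgetD
  rcases hcase with hS | hne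
  · obtain ⟨hA, hAB, -⟩ := master lam ξ hξ hS
    have h1 : (Finset.univ.filter (fun k => lam k < τ)).card ≤ i := by
      rw [← hA]; exact hpos.1
    have h2 : i < (Finset.univ.filter (fun k => lam k < τ)).card + (mv lam τ - 1) := by
      rw [← hAB]; exact hpos.2
    have hm1 : 1 ≤ mv lam τ := mv_pos hS
    have hble : (Finset.univ.filter (fun k => lam k ≤ τ)).card
        = (Finset.univ.filter (fun k => lam k < τ)).card + mv lam τ := by
      have h3 : Finset.univ.filter (fun k => lam k ≤ τ)
          = Finset.univ.filter (fun k => lam k < τ) ∪ Finset.univ.filter (fun k => lam k = τ) := by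
        ext k
        simp only [Finset.mem_union, Finset.mem_filter, Finset.mem_univ, true_and]
        constructor
        · intro h
          rcases lt_or_eq_of_le h with h' | h'
          · exact Or.inl h'
          · exact Or.inr h'
        · rintro (h | h)
          · exact h.le
          · exact h.le
      have h4 : Disjoint (Finset.univ.filter (fun k => lam k < τ))
          (Finset.univ.filter (fun k => lam k = τ)) := by
        rw [Finset.disjoint_left]
        intro k hk1 hk2
        simp only [Finset.mem_filter] at hk1 hk2
        rw [hk2.2] at hk1
        exact absurd hk1.2 (lt_irrefl τ)
      rw [h3, Finset.card_union_of_disjoint h4, mv]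
    have hle_i : lam ⟨i, Nat.lt_of_succ_lt hi⟩ ≤ τ := by
      by_contra h
      push_neg at h
      have := mono_le_seg lam hlam τ ⟨i, Nat.lt_of_succ_lt hi⟩ h
      simp only [] at this
      omega
    have hge_i : ¬ lam ⟨i, Nat.lt_of_succ_lt hi⟩ < τ := by
      intro h
      have := mono_lt_seg lam hlam τ ⟨i, Nat.lt_of_succ_lt hi⟩ h
      simp only [] at this
      omega
    have hle_i1 : lam ⟨i + 1, hi⟩ ≤ τ := by
      by_contra h
      push_neg at h
      have := mono_le_seg lam hlam τ ⟨i + 1, hi⟩ h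
      simp only [] at this
      omega
    have hge_i1 : ¬ lam ⟨i + 1, hi⟩ < τ := by
      intro h
      have := mono_lt_seg lam hlam τ ⟨i + 1, hi⟩ h
      simp only [] at this
      omega
    have heq_i : lam ⟨i, Nat.lt_of_succ_lt hi⟩ = τ := le_antisymm hle_i (not_lt.mp hge_i)
    have heq_i1 : lam ⟨i + 1, hi⟩ = τ := le_antisymm hle_i1 (not_lt.mp hge_i1)
    exact absurd hlt (not_lt.mpr (le_of_eq (heq_i1.trans heq_i.symm)))
  · have hτmem : τ ∈ (IPoly n lam ξ).roots := by
      rw [← hgetD]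
      have hlen : i < ((IPoly n lam ξ).roots.sort (· ≤ ·)).length := by
        rw [Multiset.length_sort]; omega
      rw [List.getD_eq_getElem _ 0 hlen]
      exact (Multiset.mem_sort (· ≤ ·)).mp (List.getElem_mem hlen)
    exact hne (Polynomial.isRoot_of_mem_roots hτmem)

theorem stmt2 (n : ℕ) (hn : 2 ≤ n) (lam : Fin n → ℝ) (hlam : Monotone lam)
    (i : ℕ) (hi : i + 1 < n) (hlt : lam ⟨i, by omega⟩ < lam ⟨i + 1, hi⟩) (τ : ℝ) :
    volume {ξ : Fin n → ℝ |
      ξ ≠ 0 ∧ ((IPoly n lam ξ).roots.sort (· ≤ ·)).getD i 0 = τ} = 0 := by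
  classical
  by_cases hτ : τ ∈ Sv lam
  · refine measure_mono_null (fun ξ hmem => ?_)
      (measure_iUnion_null (fun j => hyperplane_null (n := n) j))
    simp only [Set.mem_setOf_eq] at hmem
    simp only [Set.mem_iUnion, Set.mem_setOf_eq]
    by_contra h
    push_neg at h
    exact main_ne lam hlam i hi hlt τ ξ h (Or.inl hτ) hmem.2
  · obtain ⟨m', rfl⟩ : ∃ m', n = m' + 1 := ⟨n - 1, by omega⟩
    set q : Fin (m' + 1) → ℝ := fun j => (PiPoly (m' + 1) lam j).eval τ with hqdef
    have hq : ∀ j, q j ≠ 0 := by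
      intro j
      rw [hqdef]
      simp only [PiPoly, eval_prod, eval_sub, eval_C, eval_X]
      apply Finset.prod_ne_zero_iff.mpr
      intro l _
      intro hzero
      apply hτ
      have : lam l = τ := by linarith [sub_eq_zero.mp hzero]
      exact Finset.mem_image.mpr ⟨l, Finset.mem_univ l, this⟩
    refine measure_mono_null (fun ξ hmem => ?_)
      (measure_union_null (measure_iUnion_null (fun j => hyperplane_null (n := m' + 1) j))
        (quadric_null q 0 (hq 0)))
    simp only [Set.mem_setOf_eq] at hmem
    simp only [Set.mem_union, Set.mem_iUnion, Set.mem_setOf_eq]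
    by_cases hz : ∃ j, ξ j = 0
    · exact Or.inl hz
    · push_neg at hz
      right
      have heval : (IPoly (m' + 1) lam ξ).eval τ = 0 := by
        by_contra hne
        exact main_ne lam hlam i hi hlt τ ξ hz (Or.inr hne) hmem.2
      rw [IPoly, eval_finset_sum] at heval
      rw [← heval]
      apply Finset.sum_congr rfl
      intro j _
      rw [eval_mul, eval_C, hqdef]
      ring

end aux
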